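/- In the canonical game built from a maximal consistent set ω₀, for every play (δ,ω) ∈ P, every action profile γ ∈ Δ^C with ‖γ‖ ≤ s, and every formula ¬(φ → B^s_C φ) ∈ ω, there exists a play (δ',ω') ∈ P such that δ' agrees with γ on C and φ ∈ ω'. -/

import Mathlib

/-- Formulas of the logic of blameworthiness with sacrifice over agent type `A`:
propositional variables, negation, implication, the universal modality `N`,
and the blameworthiness modality `B s C φ` ("coalition `C` is blameable for `φ`
with degree (sacrifice) `s`"). -/
inductive Formula (A : Type) : Type where
  | var : ℕ → Formula A
  | neg : Formula A → Formula A
  | impl : Formula A → Formula A → Formula A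
  | N : Formula A → Formula A
  | B : ℝ → Finset A → Formula A → Formula A

namespace Formula

/-- Disjunction, defined as usual. -/
def or {A : Type} (φ ψ : Formula A) : Formula A := (φ.neg).impl ψ

/-- Conjunction, defined as usual. -/
def and {A : Type} (φ ψ : Formula A) : Formula A := (φ.impl ψ.neg).neg

/-- The modality `N̄ φ := ¬ N ¬ φ` ("φ holds at some play"). -/
def nbar {A : Type} (φ : Formula A) : Formula A := (Formula.N φ.neg).neg

/-- A contradictory formula (used as the empty disjunction). -/
def fbot {A : Type} : Formula A := ((Formula.var 0).impl (Formula.var 0)).neg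

end Formula

/-- Finite disjunction `χ₁ ∨ ⋯ ∨ χₙ` of a list of formulas. -/
def bigOr {A : Type} : List (Formula A) → Formula A
  | [] => Formula.fbot
  | φ :: l => l.foldl Formula.or φ

/-- A game `(Δ, ‖·‖, d₀, Ω, P, π)`: a nonempty set of actions `Δ` with
nonnegative costs and a zero-cost action `d₀`, a set of outcomes `Ω`,
a set of plays `P` (pairs of a complete action profile and an outcome),
and a valuation `π` of propositional variables by sets of plays. -/
structure Game (A : Type) where
  Δ : Type
  Ω : Type
  cost : Δ → ℝ
  cost_nonneg : ∀ d : Δ, 0 ≤ cost d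
  d0 : Δ
  cost_d0 : cost d0 = 0
  P : Set ((A → Δ) × Ω)
  π : ℕ → Set ((A → Δ) × Ω)

/-- Satisfaction relation `(δ,ω) ⊨ φ`.  In particular
`(δ,ω) ⊨ B s C φ` iff `(δ,ω) ⊨ φ` and there is an action profile `γ` of the
coalition `C` of total cost `∑ a ∈ C, ‖γ(a)‖ ≤ s` such that every play
agreeing with `γ` on `C` falsifies `φ`. -/
def Sat {A : Type} (G : Game A) : ((A → G.Δ) × G.Ω) → Formula A → Prop
  | p, .var n => p ∈ G.π n
  | p, .neg φ => ¬ Sat G p φ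
  | p, .impl φ ψ => Sat G p φ → Sat G p ψ
  | _, .N φ => ∀ q ∈ G.P, Sat G q φ
  | p, .B s C φ => Sat G p φ ∧ ∃ γ : A → G.Δ,
      (∑ a ∈ C, G.cost (γ a)) ≤ s ∧
      ∀ q ∈ G.P, (∀ a ∈ C, q.1 a = γ a) → ¬ Sat G q φ

/-- A formula is a propositional tautology if it evaluates to true under every
Boolean valuation of formulas that respects negation and implication. -/
def Tautology {A : Type} (φ : Formula A) : Prop :=
  ∀ v : Formula A → Bool,
    (∀ ψ : Formula A, v ψ.neg = !(v ψ)) →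
    (∀ ψ χ : Formula A, v (ψ.impl χ) = (!(v ψ) || v χ)) →
    v φ = true

/-- Theorems of the logic of blameworthiness with sacrifice: propositional
tautologies, the Truth, Distributivity, Negative Introspection, None to Blame,
Monotonicity, Joint Responsibility, Blame for Cause, and Fairness axioms,
closed under Modus Ponens and Necessitation. -/
inductive Prov {A : Type} [DecidableEq A] : Formula A → Prop
  | taut {φ : Formula A} : Tautology φ → Prov φ
  | truthN {φ : Formula A} : Prov ((Formula.N φ).impl φ)
  | truthB {s : ℝ} {C : Finset A} {φ : Formula A} (hs : 0 ≤ s) :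
      Prov ((Formula.B s C φ).impl φ)
  | distr {φ ψ : Formula A} :
      Prov ((Formula.N (φ.impl ψ)).impl ((Formula.N φ).impl (Formula.N ψ)))
  | negIntro {φ : Formula A} :
      Prov (((Formula.N φ).neg).impl (Formula.N ((Formula.N φ).neg)))
  | noneToBlame {s : ℝ} {φ : Formula A} (hs : 0 ≤ s) :
      Prov ((Formula.B s (∅ : Finset A) φ).neg)
  | mono {s t : ℝ} {C D : Finset A} {φ : Formula A}
      (hs : 0 ≤ s) (hst : s ≤ t) (hCD : C ⊆ D) :
      Prov ((Formula.B s C φ).impl (Formula.B t D φ))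
  | joint {s t : ℝ} {C D : Finset A} {φ ψ : Formula A}
      (hs : 0 ≤ s) (ht : 0 ≤ t) (hCD : Disjoint C D) :
      Prov (((Formula.B s C φ).nbar.and (Formula.B t D ψ).nbar).impl
        ((φ.or ψ).impl (Formula.B (s + t) (C ∪ D) (φ.or ψ))))
  | cause {s : ℝ} {C : Finset A} {φ ψ : Formula A} (hs : 0 ≤ s) :
      Prov ((Formula.N (φ.impl ψ)).impl
        ((Formula.B s C ψ).impl (φ.impl (Formula.B s C φ))))
  | fair {s : ℝ} {C : Finset A} {φ : Formula A} (hs : 0 ≤ s) :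
      Prov ((Formula.B s C φ).impl (Formula.N (φ.impl (Formula.B s C φ))))
  | mp {φ ψ : Formula A} : Prov (φ.impl ψ) → Prov φ → Prov ψ
  | nec {φ : Formula A} : Prov φ → Prov (Formula.N φ)

/-- Derivability `X ⊢ φ` from a set of hypotheses: hypotheses and theorems of
the logic, closed under Modus Ponens. -/
inductive Derives {A : Type} [DecidableEq A] (X : Set (Formula A)) : Formula A → Prop
  | hyp {φ : Formula A} : φ ∈ X → Derives X φ
  | thm {φ : Formula A} : Prov φ → Derives X φ
  | mp {φ ψ : Formula A} : Derives X (φ.impl ψ) → Derives X φ → Derives X ψ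

/-- A set of formulas is consistent if it cannot derive both a formula and its
negation. -/
def Consistent {A : Type} [DecidableEq A] (X : Set (Formula A)) : Prop :=
  ∀ φ : Formula A, ¬ (Derives X φ ∧ Derives X φ.neg)

/-- Maximal consistent sets of formulas. -/
def MCS {A : Type} [DecidableEq A] (X : Set (Formula A)) : Prop :=
  Consistent X ∧ ∀ φ : Formula A, φ ∈ X ∨ φ.neg ∈ X

/-- Actions of the canonical game: the zero-cost action `d₀` (`none`) together
with all triples `(φ, C, s)` where `C` is a nonempty coalition and `s ≥ 0`. -/
def CanAct (A : Type) : Type :=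
  Option {x : Formula A × Finset A × ℝ // x.2.1.Nonempty ∧ 0 ≤ x.2.2}

/-- Outcomes of the canonical game for `ω₀`: maximal consistent sets `ω` such
that `ψ ∈ ω` whenever `N ψ ∈ ω₀`. -/
def CanOutcome {A : Type} [DecidableEq A] (ω₀ : Set (Formula A)) : Type :=
  {ω : Set (Formula A) // MCS ω ∧ ∀ φ : Formula A, Formula.N φ ∈ ω₀ → φ ∈ ω}

/-- Plays of the canonical game for `ω₀`: pairs `(δ, ω)` such that for every
formula `¬N¬B^s_C ψ ∈ ω₀`, if every member of `C` votes `(ψ, C, s)`, then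
`¬ψ ∈ ω`. -/
def canonicalP {A : Type} [DecidableEq A] (ω₀ : Set (Formula A)) :
    Set ((A → CanAct A) × CanOutcome ω₀) :=
  {p | ∀ (ψ : Formula A) (C : Finset A) (s : ℝ) (h : C.Nonempty ∧ 0 ≤ s),
        (Formula.B s C ψ).nbar ∈ ω₀ →
        (∀ a ∈ C, p.1 a = some ⟨(ψ, C, s), h⟩) → ψ.neg ∈ p.2.1}

/-- The canonical game `G(ω₀)` for a maximal consistent set `ω₀`.  The cost of
`d₀` is `0` and the cost of a triple `(φ, C, s)` is `s / |C|`. -/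
noncomputable def canonicalGame {A : Type} [DecidableEq A] (ω₀ : Set (Formula A)) : Game A where
  Δ := CanAct A
  Ω := CanOutcome ω₀
  cost := fun d => match d with
    | none => 0
    | some x => x.1.2.2 / x.1.2.1.card
  cost_nonneg := by
    rintro (_ | x)
    · exact le_refl 0
    · exact div_nonneg x.2.2 (Nat.cast_nonneg _)
  d0 := none
  cost_d0 := rfl
  P := canonicalP ω₀
  π := fun n => {p ∈ canonicalP ω₀ | Formula.var n ∈ p.2.1}


/-! ### Auxiliary lemmas -/

section Aux

variable {A : Type} [DecidableEq A]

open Formula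

/- Propositional tautology instances. -/

private lemma pId (φ : Formula A) : Prov (φ.impl φ) := by
  apply Prov.taut; intro v hn hi; simp only [hi]; cases v φ <;> rfl

private lemma pS1 (φ ψ : Formula A) : Prov (ψ.impl (φ.impl ψ)) := by
  apply Prov.taut; intro v hn hi; simp only [hi]; cases v φ <;> cases v ψ <;> rfl

private lemma pK (φ ψ χ : Formula A) :
    Prov ((φ.impl (ψ.impl χ)).impl ((φ.impl ψ).impl (φ.impl χ))) := by
  apply Prov.taut; intro v hn hi; simp only [hi]
  cases v φ <;> cases v ψ <;> cases v χ <;> rfl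

private lemma pBot (σ : Formula A) : Prov (σ.impl (σ.neg.impl Formula.fbot)) := by
  apply Prov.taut; intro v hn hi; simp only [Formula.fbot, hi, hn]
  cases v σ <;> cases v (Formula.var 0) <;> rfl

private lemma pFbotNeg : Prov ((Formula.fbot (A := A)).neg) := by
  apply Prov.taut; intro v hn hi; simp only [Formula.fbot, hi, hn]
  cases v (Formula.var 0) <;> rfl

private lemma pOrIntro (ψ a : Formula A) : Prov ((a.neg.impl ψ).impl (ψ.or a)) := by
  apply Prov.taut; intro v hn hi; simp only [Formula.or, hi, hn]
  cases v ψ <;> cases v a <;> rfl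

private lemma pOrMono (α β a : Formula A) :
    Prov ((α.impl β).impl ((α.or a).impl (β.or a))) := by
  apply Prov.taut; intro v hn hi; simp only [Formula.or, hi, hn]
  cases v α <;> cases v β <;> cases v a <;> rfl

private lemma pFbotOr (χ : Formula A) : Prov (((Formula.fbot).or χ).impl χ) := by
  apply Prov.taut; intro v hn hi; simp only [Formula.or, Formula.fbot, hi, hn]
  cases v χ <;> cases v (Formula.var 0) <;> rfl

private lemma pNegImpL (φ B : Formula A) : Prov (((φ.impl B).neg).impl φ) := by
  apply Prov.taut; intro v hn hi; simp only [hi, hn]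
  cases v φ <;> cases v B <;> rfl

private lemma pNegImpR (φ B : Formula A) : Prov (((φ.impl B).neg).impl B.neg) := by
  apply Prov.taut; intro v hn hi; simp only [hi, hn]
  cases v φ <;> cases v B <;> rfl

private lemma pContra (X Y : Formula A) : Prov ((X.impl Y).impl (Y.neg.impl X.neg)) := by
  apply Prov.taut; intro v hn hi; simp only [hi, hn]
  cases v X <;> cases v Y <;> rfl

private lemma pContra2 (X Y : Formula A) : Prov ((X.neg.impl Y).impl (Y.neg.impl X)) := by
  apply Prov.taut; intro v hn hi; simp only [hi, hn]
  cases v X <;> cases v Y <;> rfl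

private lemma pAndIntro (P Q : Formula A) : Prov (P.impl (Q.impl (P.and Q))) := by
  apply Prov.taut; intro v hn hi; simp only [Formula.and, hi, hn]
  cases v P <;> cases v Q <;> rfl

private lemma pOrInl (α χ : Formula A) : Prov (α.impl (α.or χ)) := by
  apply Prov.taut; intro v hn hi; simp only [Formula.or, hi, hn]
  cases v α <;> cases v χ <;> rfl

private lemma pCompose (a b c : Formula A) :
    Prov ((a.impl b).impl ((b.impl c).impl (a.impl c))) := by
  apply Prov.taut; intro v hn hi; simp only [hi]
  cases v a <;> cases v b <;> cases v c <;> rfl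

private lemma pNegElim (a b : Formula A) :
    Prov ((a.impl b).impl ((a.impl b.neg).impl a.neg)) := by
  apply Prov.taut; intro v hn hi; simp only [hi, hn]
  cases v a <;> cases v b <;> rfl

private lemma pNotOf (φ : Formula A) : Prov ((φ.impl Formula.fbot).impl φ.neg) := by
  apply Prov.taut; intro v hn hi; simp only [Formula.fbot, hi, hn]
  cases v φ <;> cases v (Formula.var 0) <;> rfl

private lemma prov_comp {a b c : Formula A} (h1 : Prov (a.impl b)) (h2 : Prov (b.impl c)) :
    Prov (a.impl c) :=
  Prov.mp (Prov.mp (pCompose a b c) h1) h2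

/- Basic facts about `Derives`. -/

private lemma derives_mono {X X' : Set (Formula A)} (hXX : X ⊆ X') {φ : Formula A}
    (h : Derives X φ) : Derives X' φ := by
  induction h with
  | hyp h => exact Derives.hyp (hXX h)
  | thm h => exact Derives.thm h
  | mp _ _ ih1 ih2 => exact Derives.mp ih1 ih2

private lemma deduction {X : Set (Formula A)} {φ ψ : Formula A}
    (h : Derives (insert φ X) ψ) : Derives X (φ.impl ψ) := by
  induction h with
  | @hyp χ h =>
    rcases Set.mem_insert_iff.mp h with h | h
    · subst h; exact Derives.thm (pId _)
    · exact Derives.mp (Derives.thm (pS1 φ χ)) (Derives.hyp h)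
  | @thm χ h => exact Derives.mp (Derives.thm (pS1 φ χ)) (Derives.thm h)
  | @mp α β _ _ ih1 ih2 =>
    exact Derives.mp (Derives.mp (Derives.thm (pK φ α β)) ih1) ih2

private lemma derives_K {X : Set (Formula A)} {φ ψ : Formula A}
    (h1 : Derives X (Formula.N (φ.impl ψ))) (h2 : Derives X (Formula.N φ)) :
    Derives X (Formula.N ψ) :=
  Derives.mp (Derives.mp (Derives.thm Prov.distr) h1) h2

private lemma derives_N {X Y : Set (Formula A)} (hY : ∀ ψ ∈ Y, Derives X (Formula.N ψ))
    {φ : Formula A} (h : Derives Y φ) : Derives X (Formula.N φ) := by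
  induction h with
  | hyp h => exact hY _ h
  | thm h => exact Derives.thm (Prov.nec h)
  | mp _ _ ih1 ih2 => exact derives_K ih1 ih2

private lemma derives_finite {X : Set (Formula A)} {φ : Formula A} (h : Derives X φ) :
    ∃ S : Finset (Formula A), ↑S ⊆ X ∧ Derives (↑S : Set (Formula A)) φ := by
  classical
  induction h with
  | @hyp χ h => exact ⟨{χ}, by simpa using h, Derives.hyp (by simp)⟩
  | @thm χ h => exact ⟨∅, by simp, Derives.thm h⟩
  | mp _ _ ih1 ih2 =>
    obtain ⟨S1, hS1, hd1⟩ := ih1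
    obtain ⟨S2, hS2, hd2⟩ := ih2
    refine ⟨S1 ∪ S2, ?_, Derives.mp (derives_mono ?_ hd1) (derives_mono ?_ hd2)⟩
    · intro x hx; simp only [Finset.coe_union, Set.mem_union] at hx
      exact hx.elim (fun h => hS1 h) (fun h => hS2 h)
    · intro x hx; simp only [Finset.coe_union, Set.mem_union]; exact Or.inl hx
    · intro x hx; simp only [Finset.coe_union, Set.mem_union]; exact Or.inr hx

private lemma consistent_iff {X : Set (Formula A)} :
    Consistent X ↔ ¬ Derives X Formula.fbot := by
  constructor
  · intro hc hd
    exact hc Formula.fbot ⟨hd, Derives.thm pFbotNeg⟩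
  · intro hd σ hσ
    exact hd (Derives.mp (Derives.mp (Derives.thm (pBot σ)) hσ.1) hσ.2)

private lemma mcs_closed {X : Set (Formula A)} (hX : MCS X) {φ : Formula A}
    (h : Derives X φ) : φ ∈ X := by
  rcases hX.2 φ with hm | hm
  · exact hm
  · exact absurd ⟨h, Derives.hyp hm⟩ (hX.1 φ)

end Aux

section Aux2

variable {A : Type} [DecidableEq A]

open Formula

private lemma insert_incons {X : Set (Formula A)} {φ : Formula A}
    (h : ¬ Consistent (insert φ X)) : Derives X φ.neg := by
  rw [consistent_iff, not_not] at h
  exact Derives.mp (Derives.thm (pNotOf φ)) (deduction h)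

private lemma lindenbaum {X : Set (Formula A)} (hX : Consistent X) :
    ∃ Y : Set (Formula A), X ⊆ Y ∧ MCS Y := by
  classical
  set S : Set (Set (Formula A)) := {Y | Consistent Y} with hS
  have hchain : ∀ c ⊆ S, IsChain (fun x1 x2 => x1 ⊆ x2) c → c.Nonempty →
      ∃ ub ∈ S, ∀ s ∈ c, s ⊆ ub := by
    intro c hcS hc hne
    refine ⟨⋃₀ c, ?_, fun s hs => Set.subset_sUnion_of_mem hs⟩
    rw [hS, Set.mem_setOf_eq, consistent_iff]
    intro hd
    obtain ⟨T, hT, hdT⟩ := derives_finite hd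
    -- find a member of the chain containing T
    have key : ∀ T : Finset (Formula A), ↑T ⊆ ⋃₀ c → ∃ m ∈ c, ↑T ⊆ m := by
      intro T
      induction T using Finset.induction_on with
      | empty => intro _; obtain ⟨m, hm⟩ := hne; exact ⟨m, hm, by simp⟩
      | @insert a T' ha ih =>
        intro hT
        obtain ⟨m1, hm1, hTm1⟩ := ih (fun x hx => hT (by simp [hx]))
        obtain ⟨m2, hm2⟩ : ∃ m ∈ c, a ∈ m := by
          have := hT (by simp : a ∈ (↑(insert a T') : Set (Formula A)))
          simpa [Set.mem_sUnion] using this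
        rcases IsChain.total hc hm1 hm2.1 with h12 | h21
        · exact ⟨m2, hm2.1, by
            intro x hx
            rcases Finset.mem_coe.mp hx |> Finset.mem_insert.mp with rfl | hx'
            · exact hm2.2
            · exact h12 (hTm1 hx')⟩
        · exact ⟨m1, hm1, by
            intro x hx
            rcases Finset.mem_coe.mp hx |> Finset.mem_insert.mp with rfl | hx'
            · exact h21 hm2.2
            · exact hTm1 hx'⟩
    obtain ⟨m, hmc, hTm⟩ := key T hT
    have hmcons : Consistent m := hcS hmc
    rw [consistent_iff] at hmcons
    exact hmcons (derives_mono hTm hdT)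
  obtain ⟨m, hXm, hmax⟩ := zorn_subset_nonempty S hchain X hX
  refine ⟨m, hXm, hmax.1, ?_⟩
  intro φ
  by_cases hφ : Consistent (insert φ m)
  · left
    have := hmax.2 (y := insert φ m) hφ (Set.subset_insert _ _)
    exact this (Set.mem_insert _ _)
  · right
    by_cases hφ' : Consistent (insert φ.neg m)
    · have := hmax.2 (y := insert φ.neg m) hφ' (Set.subset_insert _ _)
      exact this (Set.mem_insert _ _)
    · exfalso
      exact hmax.1 φ.neg ⟨insert_incons hφ, insert_incons hφ'⟩

/- Modal lemmas. -/

private lemma prov_nbar_mono {X Y : Formula A} (h : Prov (X.impl Y)) :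
    Prov (X.nbar.impl Y.nbar) := by
  have h1 : Prov (Y.neg.impl X.neg) := Prov.mp (pContra X Y) h
  have h2 : Prov ((Formula.N Y.neg).impl (Formula.N X.neg)) :=
    Prov.mp Prov.distr (Prov.nec h1)
  exact Prov.mp (pContra _ _) h2

private lemma derives_nbar_mono {Ω : Set (Formula A)} {X Y : Formula A}
    (h : Derives Ω (Formula.N (X.impl Y))) : Derives Ω (X.nbar.impl Y.nbar) := by
  have h1 : Derives Ω (Formula.N (Y.neg.impl X.neg)) :=
    derives_K (Derives.thm (Prov.nec (pContra X Y))) h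
  have h2 : Derives Ω ((Formula.N Y.neg).impl (Formula.N X.neg)) :=
    Derives.mp (Derives.thm Prov.distr) h1
  exact Derives.mp (Derives.thm (pContra _ _)) h2

private lemma prov_5c (χ : Formula A) : Prov ((Formula.N χ).nbar.impl (Formula.N χ)) := by
  have h : Prov (((Formula.N χ).neg).impl (Formula.N ((Formula.N χ).neg))) := Prov.negIntro
  exact Prov.mp (pContra2 _ _) h

private lemma prov_T' (ψ : Formula A) : Prov (ψ.impl ψ.nbar) := by
  have h : Prov ((Formula.N ψ.neg).impl ψ.neg) := Prov.truthN
  have taut : Prov (((Formula.N ψ.neg).impl ψ.neg).impl (ψ.impl (Formula.N ψ.neg).neg)) := by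
    apply Prov.taut; intro v hn hi; simp only [hi, hn]
    cases v (Formula.N ψ.neg) <;> cases v ψ <;> rfl
  exact Prov.mp taut h

private lemma prov_4 (φ : Formula A) :
    Prov ((Formula.N φ).impl (Formula.N (Formula.N φ))) := by
  have h1 : Prov ((Formula.N φ).impl (Formula.N φ).nbar) := prov_T' (Formula.N φ)
  have h2 : Prov ((Formula.N φ).nbar.impl (Formula.N ((Formula.N φ).nbar))) := Prov.negIntro
  have h3 : Prov ((Formula.N ((Formula.N φ).nbar)).impl (Formula.N (Formula.N φ))) :=
    Prov.mp Prov.distr (Prov.nec (prov_5c φ))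
  exact prov_comp (prov_comp h1 h2) h3

private lemma prov_nbar_intro (ψ : Formula A) : Prov (ψ.nbar.impl (Formula.N ψ.nbar)) :=
  Prov.negIntro

end Aux2

section Aux3

variable {A : Type} [DecidableEq A]

open Formula

private lemma LJoint {Ω : Set (Formula A)} {α χ : Formula A} {U D : Finset A} {T t : ℝ}
    (hT : 0 ≤ T) (ht : 0 ≤ t) (hdisj : Disjoint U D)
    (h1 : Derives Ω ((Formula.B T U α).nbar))
    (h2 : Derives Ω ((Formula.B t D χ).nbar)) :
    Derives Ω ((Formula.B (T + t) (U ∪ D) (α.or χ)).nbar) := by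
  set P := (Formula.B T U α).nbar with hP
  set Q := (Formula.B t D χ).nbar with hQ
  set R := α.or χ with hR
  set S := Formula.B (T + t) (U ∪ D) (α.or χ) with hSdef
  have hNP : Derives Ω (Formula.N P) := Derives.mp (Derives.thm (prov_nbar_intro _)) h1
  have hNQ : Derives Ω (Formula.N Q) := Derives.mp (Derives.thm (prov_nbar_intro _)) h2
  have hNPQ : Derives Ω (Formula.N (P.and Q)) :=
    derives_K (derives_K (Derives.thm (Prov.nec (pAndIntro P Q))) hNP) hNQ
  have hjoint : Prov ((P.and Q).impl (R.impl S)) := Prov.joint hT ht hdisj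
  have hNRS : Derives Ω (Formula.N (R.impl S)) :=
    derives_K (Derives.thm (Prov.nec hjoint)) hNPQ
  have hmono : Derives Ω (R.nbar.impl S.nbar) := derives_nbar_mono hNRS
  -- nbar R from nbar (B T U α)
  have hBR : Prov ((Formula.B T U α).impl R) :=
    prov_comp (Prov.truthB hT) (pOrInl α χ)
  have hnbarR : Derives Ω R.nbar :=
    Derives.mp (Derives.thm (prov_nbar_mono hBR)) h1
  exact Derives.mp hmono hnbarR

private lemma provFoldMono {α β : Formula A} (l : List (Formula A))
    (h : Prov (α.impl β)) :
    Prov ((l.foldl Formula.or α).impl (l.foldl Formula.or β)) := by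
  induction l generalizing α β with
  | nil => exact h
  | cons a l ih =>
    exact ih (Prov.mp (pOrMono α β a) h)

private lemma stepA (W : Set (Formula A)) :
    ∀ (l : List (Formula A)) (ψ : Formula A),
      Derives (W ∪ {f | ∃ χ ∈ l, f = χ.neg}) ψ → Derives W (l.foldl Formula.or ψ) := by
  intro l
  induction l with
  | nil =>
    intro ψ h
    have : W ∪ {f | ∃ χ ∈ ([] : List (Formula A)), f = χ.neg} = W := by
      simp
    rwa [this] at h
  | cons a l ih =>
    intro ψ h
    have hset : W ∪ {f | ∃ χ ∈ a :: l, f = χ.neg}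
        = insert a.neg (W ∪ {f | ∃ χ ∈ l, f = χ.neg}) := by
      ext x
      simp only [Set.mem_union, Set.mem_setOf_eq, List.mem_cons, Set.mem_insert_iff]
      constructor
      · rintro (hx | ⟨χ, (rfl | hχ), rfl⟩)
        · exact Or.inr (Or.inl hx)
        · exact Or.inl rfl
        · exact Or.inr (Or.inr ⟨χ, hχ, rfl⟩)
      · rintro (rfl | hx | ⟨χ, hχ, rfl⟩)
        · exact Or.inr ⟨a, Or.inl rfl, rfl⟩
        · exact Or.inl hx
        · exact Or.inr ⟨χ, Or.inr hχ, rfl⟩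
    rw [hset] at h
    have h1 : Derives (W ∪ {f | ∃ χ ∈ l, f = χ.neg}) (a.neg.impl ψ) := deduction h
    have h2 : Derives (W ∪ {f | ∃ χ ∈ l, f = χ.neg}) (ψ.or a) :=
      Derives.mp (Derives.thm (pOrIntro ψ a)) h1
    exact ih (ψ.or a) h2

end Aux3

section Aux4

variable {A : Type} [DecidableEq A]

open Formula

/-- The non-`d₀` actions of the canonical game. -/
private abbrev BAct (A : Type) : Type :=
  {x : Formula A × Finset A × ℝ // x.2.1.Nonempty ∧ 0 ≤ x.2.2}

private def Tsum (l : List (BAct A)) : ℝ := (l.map (fun x => x.1.2.2)).sum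

private def Uun [DecidableEq A] (l : List (BAct A)) : Finset A :=
  l.foldr (fun x u => x.1.2.1 ∪ u) ∅

private lemma Tsum_nonneg (l : List (BAct A)) : 0 ≤ Tsum l := by
  apply List.sum_nonneg
  rintro r hr
  obtain ⟨x, hx, rfl⟩ := List.mem_map.mp hr
  exact x.2.2

private lemma disjoint_Uun (l : List (BAct A)) (D : Finset A)
    (h : ∀ y ∈ l, Disjoint D y.1.2.1) : Disjoint D (Uun l) := by
  induction l with
  | nil => simp [Uun]
  | cons x l ih =>
    have : Uun (x :: l) = x.1.2.1 ∪ Uun l := rfl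
    rw [this, Finset.disjoint_union_right]
    exact ⟨h x (List.mem_cons_self), ih fun y hy => h y (List.mem_cons_of_mem _ hy)⟩

private lemma Uun_subset {C : Finset A} (l : List (BAct A))
    (h : ∀ x ∈ l, x.1.2.1 ⊆ C) : Uun l ⊆ C := by
  induction l with
  | nil => simp [Uun]
  | cons x l ih =>
    have : Uun (x :: l) = x.1.2.1 ∪ Uun l := rfl
    rw [this]
    exact Finset.union_subset (h x (List.mem_cons_self))
      (ih fun y hy => h y (List.mem_cons_of_mem _ hy))

private lemma cost_some (ω₀ : Set (Formula A)) (x : BAct A) :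
    (canonicalGame ω₀).cost (some x) = x.1.2.2 / x.1.2.1.card := rfl

private lemma sum_costs (ω₀ : Set (Formula A)) (γ : A → CanAct A) :
    ∀ l : List (BAct A), l.Pairwise (fun x y => Disjoint x.1.2.1 y.1.2.1) →
      (∀ x ∈ l, ∀ b ∈ x.1.2.1, γ b = some x) →
      Tsum l = ∑ a ∈ Uun l, (canonicalGame ω₀).cost (γ a) := by
  intro l
  induction l with
  | nil => intro _ _; simp [Tsum, Uun]
  | cons x l ih =>
    intro hpw hv
    have hpc := List.pairwise_cons.mp hpw
    have hdisj : Disjoint x.1.2.1 (Uun l) := disjoint_Uun l _ hpc.1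
    have hUun : Uun (x :: l) = x.1.2.1 ∪ Uun l := rfl
    rw [hUun, Finset.sum_union hdisj,
      ← ih hpc.2 (fun y hy => hv y (List.mem_cons_of_mem _ hy))]
    have hsum : ∑ a ∈ x.1.2.1, (canonicalGame ω₀).cost (γ a) = x.1.2.2 := by
      have hc : ∀ a ∈ x.1.2.1,
          (canonicalGame ω₀).cost (γ a) = x.1.2.2 / (x.1.2.1.card : ℝ) := by
        intro a ha
        rw [hv x (List.mem_cons_self) a ha]
        rfl
      rw [Finset.sum_congr rfl hc, Finset.sum_const, nsmul_eq_mul]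
      have hcard : ((x.1.2.1.card : ℝ)) ≠ 0 := by
        have := Finset.card_ne_zero_of_mem x.2.1.choose_spec
        exact_mod_cast this
      field_simp
    rw [hsum]
    simp [Tsum]

private lemma stepB {Ω : Set (Formula A)} :
    ∀ (l : List (BAct A)) (α : Formula A) (U : Finset A) (T : ℝ),
      0 ≤ T →
      Derives Ω ((Formula.B T U α).nbar) →
      (∀ x ∈ l, Derives Ω ((Formula.B x.1.2.2 x.1.2.1 x.1.1).nbar) ∧ Disjoint U x.1.2.1) →
      l.Pairwise (fun x y => Disjoint x.1.2.1 y.1.2.1) →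
      Derives Ω ((Formula.B (T + Tsum l) (U ∪ Uun l)
        (l.foldl (fun a x => a.or x.1.1) α)).nbar) := by
  intro l
  induction l with
  | nil =>
    intro α U T hT hb _ _
    have h1 : Tsum ([] : List (BAct A)) = 0 := by simp [Tsum]
    have h2 : Uun ([] : List (BAct A)) = ∅ := rfl
    rw [h1, h2, add_zero, Finset.union_empty]
    exact hb
  | cons x l ih =>
    intro α U T hT hb hall hpw
    have hpc := List.pairwise_cons.mp hpw
    have hx := hall x (List.mem_cons_self)
    have hLJ : Derives Ω ((Formula.B (T + x.1.2.2) (U ∪ x.1.2.1) (α.or x.1.1)).nbar) :=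
      LJoint hT x.2.2 hx.2 hb hx.1
    have hres := ih (α.or x.1.1) (U ∪ x.1.2.1) (T + x.1.2.2)
      (add_nonneg hT x.2.2) hLJ
      (fun y hy => ⟨(hall y (List.mem_cons_of_mem _ hy)).1,
        Finset.disjoint_union_left.mpr
          ⟨(hall y (List.mem_cons_of_mem _ hy)).2, hpc.1 y hy⟩⟩)
      hpc.2
    have e1 : Tsum (x :: l) = x.1.2.2 + Tsum l := by simp [Tsum]
    have e2 : Uun (x :: l) = x.1.2.1 ∪ Uun l := rfl
    rw [e1, e2, ← add_assoc, ← Finset.union_assoc]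
    exact hres

end Aux4
/-- In the canonical game for a maximal consistent set `ω₀`, for
every play `(δ,ω) ∈ P`, every action profile `γ` with `‖γ‖ ≤ s` on `C`, and
every formula `¬(φ → B^s_C φ) ∈ ω`, there is a play `(δ',ω') ∈ P` agreeing
with `γ` on `C` such that `φ ∈ ω'`. -/
theorem canonical_B_witness_exists {A : Type} [DecidableEq A]
    (ω₀ : Set (Formula A)) (hω₀ : MCS ω₀)
    (p : (A → (canonicalGame ω₀).Δ) × (canonicalGame ω₀).Ω)
    (hp : p ∈ (canonicalGame ω₀).P)
    (C : Finset A) (s : ℝ) (hs : 0 ≤ s) (φ : Formula A)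
    (γ : A → (canonicalGame ω₀).Δ)
    (hγ : (∑ a ∈ C, (canonicalGame ω₀).cost (γ a)) ≤ s)
    (hmem : (φ.impl (Formula.B s C φ)).neg ∈ p.2.1) :
    ∃ q ∈ (canonicalGame ω₀).P, (∀ a ∈ C, q.1 a = γ a) ∧ φ ∈ q.2.1 := by
  classical
  obtain ⟨δ, ω, hωMCS, hωN⟩ := p
  -- `hmem : (φ.impl (Formula.B s C φ)).neg ∈ ω`
  -- the "good" actions used by `γ` on `C`
  set Good : BAct A → Prop := fun x =>
    x.1.2.1 ⊆ C ∧ (Formula.B x.1.2.2 x.1.2.1 x.1.1).nbar ∈ ω₀ ∧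
      ∀ b ∈ x.1.2.1, γ b = some x with hGood
  set L : List (BAct A) :=
    ((C.toList.map γ).reduceOption.dedup).filter (fun x => decide (Good x)) with hLdef
  have hmemL : ∀ x : BAct A, Good x → x ∈ L := by
    intro x hx
    rw [hLdef, List.mem_filter]
    refine ⟨?_, decide_eq_true hx⟩
    rw [List.mem_dedup]
    refine List.reduceOption_mem_iff.mpr ?_
    obtain ⟨a, ha⟩ := x.2.1
    exact List.mem_map.mpr ⟨a, Finset.mem_toList.mpr (hx.1 ha), (hx.2.2 a ha)⟩
  have hGoodL : ∀ x ∈ L, Good x := by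
    intro x hx
    rw [hLdef, List.mem_filter] at hx
    exact of_decide_eq_true hx.2
  have hnodupL : L.Nodup := List.Nodup.filter _ (List.nodup_dedup _)
  have hpwL : L.Pairwise (fun x y => Disjoint x.1.2.1 y.1.2.1) := by
    refine List.Pairwise.imp_of_mem ?_ hnodupL
    intro a b ha hb hne
    rw [Finset.disjoint_left]
    intro i hia hib
    exact hne (Option.some.inj
      (((hGoodL a ha).2.2 i hia).symm.trans ((hGoodL b hb).2.2 i hib)))
  set Y : Set (Formula A) := {ψ | Formula.N ψ ∈ ω₀} with hYdef
  set Z : Set (Formula A) :=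
    {f | ∃ χ ∈ L.map (fun x : BAct A => x.1.1), f = χ.neg} with hZdef
  have hNtrans : ∀ θ : Formula A, Derives Y θ → Formula.N θ ∈ ω := by
    intro θ h
    have h1 : Derives ω₀ (Formula.N θ) := by
      refine derives_N ?_ h
      intro ψ hψ
      rw [hYdef, Set.mem_setOf_eq] at hψ
      exact Derives.hyp hψ
    exact hωN _ (mcs_closed hω₀ (Derives.mp (Derives.thm (prov_4 θ)) h1))
  have hnbtrans : ∀ ψ : Formula A, ψ.nbar ∈ ω₀ → ψ.nbar ∈ ω := by
    intro ψ h
    have h1 : Derives ω₀ (Formula.N ψ.nbar) :=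
      Derives.mp (Derives.thm (prov_nbar_intro ψ)) (Derives.hyp h)
    exact hωN _ (mcs_closed hω₀ h1)
  by_cases hcon : Consistent (insert φ Y ∪ Z)
  · -- the witness set is consistent: extend it by Lindenbaum
    obtain ⟨ω', hXω', hω'⟩ := lindenbaum hcon
    refine ⟨⟨fun a => if a ∈ C then γ a else (none : CanAct A),
      ⟨ω', hω', fun ψ hψ => hXω' (Or.inl (Set.mem_insert_of_mem _ hψ))⟩⟩, ?_, ?_, ?_⟩
    · -- membership in the canonical set of plays
      intro ψ C' s' h' hnb hall
      set x : BAct A := ⟨(ψ, C', s'), h'⟩ with hxdef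
      have hsub : ∀ a ∈ C', a ∈ C ∧ γ a = some x := by
        intro a ha
        have h := hall a ha
        dsimp only at h
        by_cases haC : a ∈ C
        · exact ⟨haC, (if_pos haC (t := γ a) (e := (none : CanAct A))).symm.trans h⟩
        · exact absurd ((if_neg haC (t := γ a) (e := (none : CanAct A))).symm.trans h) (by simp)
      have hGx : Good x := ⟨fun a ha => (hsub a ha).1, hnb, fun a ha => (hsub a ha).2⟩
      apply hXω'
      right
      exact ⟨ψ, List.mem_map.mpr ⟨x, hmemL x hGx, rfl⟩, rfl⟩
    · intro a ha
      exact if_pos ha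
    · exact hXω' (Or.inl (Set.mem_insert _ _))
  · -- the witness set is inconsistent: derive a contradiction
    exfalso
    rw [consistent_iff, not_not] at hcon
    have hWd : Derives (insert φ Y)
        ((L.map (fun x : BAct A => x.1.1)).foldl Formula.or Formula.fbot) :=
      stepA (insert φ Y) _ _ hcon
    cases hLc : L with
    | nil =>
      rw [hLc] at hWd
      simp only [List.map_nil, List.foldl_nil] at hWd
      have hθ : Derives Y (φ.impl Formula.fbot) := deduction hWd
      have hθω : Formula.N (φ.impl Formula.fbot) ∈ ω := hNtrans _ hθ
      have hφd : Derives ω φ :=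
        Derives.mp (Derives.thm (pNegImpL φ _)) (Derives.hyp hmem)
      have hbot : Derives ω Formula.fbot :=
        Derives.mp (Derives.mp (Derives.thm Prov.truthN) (Derives.hyp hθω)) hφd
      exact hωMCS.1 Formula.fbot ⟨hbot, Derives.thm pFbotNeg⟩
    | cons x₀ rest =>
      rw [hLc] at hWd hpwL hGoodL
      set Φ : Formula A := rest.foldl (fun a x => a.or x.1.1) x₀.1.1 with hΦdef
      have hWd' : Derives (insert φ Y) Φ := by
        simp only [List.map_cons, List.foldl_cons] at hWd
        have h1 := Derives.mp
          (Derives.thm (provFoldMono (rest.map fun x : BAct A => x.1.1) (pFbotOr x₀.1.1)))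
          hWd
        rwa [List.foldl_map] at h1
      have hθ : Derives Y (φ.impl Φ) := deduction hWd'
      have hNθω : Formula.N (φ.impl Φ) ∈ ω := hNtrans _ hθ
      have hinL : ∀ x : BAct A, x ∈ x₀ :: rest →
          Derives ω ((Formula.B x.1.2.2 x.1.2.1 x.1.1).nbar) := by
        intro x hx
        exact Derives.hyp (hnbtrans _ (hGoodL x hx).2.1)
      have hpc := List.pairwise_cons.mp hpwL
      have hb0 : Derives ω ((Formula.B x₀.1.2.2 x₀.1.2.1 x₀.1.1).nbar) :=
        hinL x₀ (List.mem_cons_self)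
      have hB := stepB rest x₀.1.1 x₀.1.2.1 x₀.1.2.2 x₀.2.2 hb0
        (fun y hy => ⟨hinL y (List.mem_cons_of_mem _ hy), hpc.1 y hy⟩)
        hpc.2
      set Tt : ℝ := x₀.1.2.2 + Tsum rest with hTtdef
      set Ut : Finset A := x₀.1.2.1 ∪ Uun rest with hUtdef
      have hTt0 : 0 ≤ Tt := add_nonneg x₀.2.2 (Tsum_nonneg rest)
      have hUtC : Ut ⊆ C := by
        have h1 := Uun_subset (C := C) (x₀ :: rest) (fun x hx => (hGoodL x hx).1)
        have h2 : Uun (x₀ :: rest) = Ut := rfl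
        rwa [h2] at h1
      have hTts : Tt ≤ s := by
        have hsc := sum_costs ω₀ γ (x₀ :: rest) hpwL
          (fun x hx => (hGoodL x hx).2.2)
        have e1 : Tsum (x₀ :: rest) = Tt := by simp [Tsum, hTtdef]
        have e2 : Uun (x₀ :: rest) = Ut := rfl
        rw [e1, e2] at hsc
        rw [hsc]
        refine le_trans (Finset.sum_le_sum_of_subset_of_nonneg hUtC ?_) hγ
        intro i _ _
        exact (canonicalGame ω₀).cost_nonneg _
      -- fairness trick: from `nbar B` obtain `N (Φ → B)`
      have hNimp : Derives ω (Formula.N (Φ.impl (Formula.B Tt Ut Φ))) := by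
        have h1 : Prov ((Formula.B Tt Ut Φ).impl
            (Formula.N (Φ.impl (Formula.B Tt Ut Φ)))) := Prov.fair hTt0
        have h2 : Derives ω ((Formula.N (Φ.impl (Formula.B Tt Ut Φ))).nbar) :=
          Derives.mp (Derives.thm (prov_nbar_mono h1)) hB
        exact Derives.mp (Derives.thm (prov_5c _)) h2
      have hImp : Derives ω (Φ.impl (Formula.B Tt Ut Φ)) :=
        Derives.mp (Derives.thm Prov.truthN) hNimp
      have hφd : Derives ω φ :=
        Derives.mp (Derives.thm (pNegImpL φ _)) (Derives.hyp hmem)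
      have hθd : Derives ω (φ.impl Φ) :=
        Derives.mp (Derives.thm Prov.truthN) (Derives.hyp hNθω)
      have hΦd : Derives ω Φ := Derives.mp hθd hφd
      have hBd : Derives ω (Formula.B Tt Ut Φ) := Derives.mp hImp hΦd
      have hcause : Prov ((Formula.N (φ.impl Φ)).impl
          ((Formula.B Tt Ut Φ).impl (φ.impl (Formula.B Tt Ut φ)))) := Prov.cause hTt0
      have hBφ : Derives ω (Formula.B Tt Ut φ) :=
        Derives.mp (Derives.mp (Derives.mp (Derives.thm hcause) (Derives.hyp hNθω)) hBd) hφd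
      have hfin : Derives ω (Formula.B s C φ) :=
        Derives.mp (Derives.thm (Prov.mono hTt0 hTts hUtC)) hBφ
      have hneg : Derives ω ((Formula.B s C φ).neg) :=
        Derives.mp (Derives.thm (pNegImpR φ _)) (Derives.hyp hmem)
      exact hωMCS.1 _ ⟨hfin, hneg⟩
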